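/- No generalized sun graph admits two disjoint total dominating sets. Stronger form: in a generalized sun graph, there is no 2-coloring of the vertices such that every degree-2 vertex and every central vertex has neighbors of both colors. -/

import Mathlib

open SimpleGraph

/-- A diagonal (chord) of a convex `n`-gon with vertices `0, …, n-1` in cyclic order,
recorded as a pair `(i, j)` with `i < j`, joining two non-adjacent vertices. -/
def IsDiag (n : ℕ) (p : ℕ × ℕ) : Prop :=
  p.1 < p.2 ∧ p.2 < n ∧ 2 ≤ p.2 - p.1 ∧ p.2 - p.1 ≤ n - 2

/-- Two diagonals of a convex polygon cross (in their interiors). -/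
def Crosses (p q : ℕ × ℕ) : Prop :=
  (p.1 < q.1 ∧ q.1 < p.2 ∧ p.2 < q.2) ∨ (q.1 < p.1 ∧ p.1 < q.2 ∧ q.2 < p.2)

/-- A triangulation of a convex `n`-gon: `n - 3` pairwise non-crossing diagonals.
This is the standard combinatorial presentation of a maximal outerplanar graph on
`n` vertices (the polygon boundary is the outer Hamiltonian cycle). -/
structure PolyTriangulation (n : ℕ) where
  diags : Finset (ℕ × ℕ)
  isDiag : ∀ p ∈ diags, IsDiag n p
  noncross : ∀ p ∈ diags, ∀ q ∈ diags, ¬ Crosses p q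
  card_eq : diags.card = n - 3

/-- The maximal outerplanar graph on `Fin n` given by a polygon triangulation:
the boundary Hamiltonian cycle `v_i v_{i+1}` together with the diagonals. -/
def PolyTriangulation.graph {n : ℕ} (T : PolyTriangulation n) : SimpleGraph (Fin n) :=
  SimpleGraph.fromRel (fun i j =>
    (i.val + 1) % n = j.val ∨ (min i.val j.val, max i.val j.val) ∈ T.diags)

/-- `S` is a total dominating set of `G`: every vertex has a neighbor in `S`. -/
def IsTotalDom {V : Type*} (G : SimpleGraph V) (S : Set V) : Prop :=
  ∀ v, ∃ u ∈ S, G.Adj v u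

/-- `G` has two disjoint total dominating sets (total domatic number at least 2). -/
def HasTwoTDS {V : Type*} (G : SimpleGraph V) : Prop :=
  ∃ S₁ S₂ : Set V, Disjoint S₁ S₂ ∧ IsTotalDom G S₁ ∧ IsTotalDom G S₂

/-- The degree of a vertex in the maximal outerplanar graph of a triangulation. -/
noncomputable def pdeg {n : ℕ} (T : PolyTriangulation n) (v : Fin n) : ℕ :=
  (T.graph.neighborSet v).ncard

/-- A central vertex: no degree-2 vertex in its closed neighborhood, and indexing the
vertices cyclically starting from `v`, all neighbors of `v` have pairwise congruent
indices mod 4. -/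
def IsCentral {n : ℕ} (T : PolyTriangulation n) (v : Fin n) : Prop :=
  (∀ u, (u = v ∨ T.graph.Adj v u) → pdeg T u ≠ 2) ∧
  (∀ u w, T.graph.Adj v u → T.graph.Adj v w →
    ((u.val + n - v.val) % n) % 4 = ((w.val + n - v.val) % n) % 4)

/-- A generalized sun graph: a maximal outerplanar graph of order `n ≡ 2 (mod 4)`
in which the number of degree-2 vertices plus central vertices equals `n / 2`. -/
def IsGenSun {n : ℕ} (T : PolyTriangulation n) : Prop :=
  n % 4 = 2 ∧
  ({v : Fin n | pdeg T v = 2}.ncard + {v : Fin n | IsCentral T v}.ncard = n / 2)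

namespace GenSun
variable {n : ℕ} (T : PolyTriangulation n)

lemma diag_facts {p : ℕ × ℕ} (hp : p ∈ T.diags) :
    p.1 + 2 ≤ p.2 ∧ p.2 ≤ n - 2 + p.1 ∧ p.2 < n := by
  have := T.isDiag _ hp
  simp only [IsDiag] at this
  omega

lemma not_mem_wrap (hn : 2 ≤ n) : (0, n-1) ∉ T.diags := by
  intro h
  have := diag_facts T h
  simp at this
  omega

lemma adj_iff {x y : Fin n} (hxy : x.val < y.val) :
    T.graph.Adj x y ↔
      (y.val = x.val + 1 ∨ (x.val = 0 ∧ y.val = n - 1) ∨ (x.val, y.val) ∈ T.diags) := by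
  have hyn : y.val < n := y.isLt
  have hne : x ≠ y := by
    intro h; rw [h] at hxy; omega
  have hmin : min x.val y.val = x.val := by omega
  have hmax : max x.val y.val = y.val := by omega
  have hmin' : min y.val x.val = x.val := by omega
  have hmax' : max y.val x.val = y.val := by omega
  constructor
  · intro h
    rw [PolyTriangulation.graph, SimpleGraph.fromRel_adj] at h
    rcases h.2 with (h1 | h1) | (h1 | h1)
    · left
      have : x.val + 1 < n ∨ x.val + 1 = n := by omega
      rcases this with h2 | h2
      · rw [Nat.mod_eq_of_lt h2] at h1; omega
      · rw [h2, Nat.mod_self] at h1; omega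
    · rw [hmin, hmax] at h1; right; right; exact h1
    · right; left
      have : y.val + 1 < n ∨ y.val + 1 = n := by omega
      rcases this with h2 | h2
      · rw [Nat.mod_eq_of_lt h2] at h1; omega
      · rw [h2, Nat.mod_self] at h1; omega
    · rw [hmin', hmax'] at h1; right; right; exact h1
  · intro h
    rw [PolyTriangulation.graph, SimpleGraph.fromRel_adj]
    refine ⟨hne, ?_⟩
    rcases h with h | h | h
    · left; left; rw [Nat.mod_eq_of_lt (by omega)]; omega
    · right; left; rw [h.1, h.2]
      have : n - 1 + 1 = n := by omega
      rw [this, Nat.mod_self]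
    · left; right; rw [hmin, hmax]; exact h

lemma adj_of_diag {a b : ℕ} (h : (a, b) ∈ T.diags) (ha : a < n) (hb : b < n) :
    T.graph.Adj ⟨a, ha⟩ ⟨b, hb⟩ := by
  have hf := diag_facts T h
  exact (adj_iff T (x := ⟨a, ha⟩) (y := ⟨b, hb⟩) (by simp; omega)).2 (Or.inr (Or.inr h))

lemma adj_succ {a : ℕ} (ha : a + 1 < n) :
    T.graph.Adj ⟨a, by omega⟩ ⟨a + 1, ha⟩ :=
  (adj_iff T (by simp)).2 (Or.inl rfl)

lemma adj_wrap (hn : 2 ≤ n) :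
    T.graph.Adj ⟨0, by omega⟩ ⟨n - 1, by omega⟩ :=
  (adj_iff T (by simp; omega)).2 (Or.inr (Or.inl ⟨rfl, rfl⟩))

/-- the three ways `x` can be adjacent to `y`, vals version, assuming x < y -/
lemma adj_elim {x y : Fin n} (hxy : x.val < y.val) (h : T.graph.Adj x y) :
    y.val = x.val + 1 ∨ (x.val = 0 ∧ y.val = n - 1) ∨ (x.val, y.val) ∈ T.diags :=
  (adj_iff T hxy).1 h

lemma mod_helper {a b : ℕ} (ha : a < n) (hb : b < n) :
    (b + n - a) % n = if a ≤ b then b - a else b + n - a := by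
  split_ifs with h
  · have : b + n - a = n + (b - a) := by omega
    rw [this, Nat.add_mod_left, Nat.mod_eq_of_lt (by omega)]
  · exact Nat.mod_eq_of_lt (by omega)

end GenSun
namespace GenSun

/-- Key counting lemma: a noncrossing family of chords strictly inside interval
`[x, x+len]` (excluding the closing chord) has at most `len - 2` elements. -/
lemma cnt (len : ℕ) : ∀ x : ℕ, ∀ D : Finset (ℕ × ℕ),
    (∀ p ∈ D, x ≤ p.1 ∧ p.1 + 2 ≤ p.2 ∧ p.2 ≤ x + len ∧ p ≠ (x, x + len)) →
    (∀ p ∈ D, ∀ q ∈ D, ¬ Crosses p q) → D.card ≤ len - 2 := by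
  induction len using Nat.strong_induction_on with
  | _ len IH =>
  intro x D hD hNC
  rcases D.eq_empty_or_nonempty with rfl | hne
  · simp
  obtain ⟨d, hd, hmax⟩ := D.exists_max_image (fun p => p.2 - p.1) hne
  obtain ⟨u, v⟩ := d
  obtain ⟨hxu, huv, hvy, hduv⟩ := hD _ hd
  have hduv' : ¬(u = x ∧ v = x + len) := by
    intro h; exact hduv (by rw [h.1, h.2])
  have hlen2 : 2 ≤ len := by omega
  set y := x + len with hy
  classical
  let D1 := D.filter (fun p => p.2 ≤ u ∧ p ≠ (x, u))
  let D2 := D.filter (fun p => u ≤ p.1 ∧ p.2 ≤ v ∧ p ≠ (u, v))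
  let D3 := D.filter (fun p => v ≤ p.1 ∧ p ≠ (v, y))
  let E1 := D.filter (fun p => p = (x, u))
  let E2 := D.filter (fun p => p = (u, v))
  let E3 := D.filter (fun p => p = (v, y))
  have hcover : D ⊆ D1 ∪ D2 ∪ D3 ∪ E1 ∪ E2 ∪ E3 := by
    intro p hp
    obtain ⟨s, t⟩ := p
    obtain ⟨hx1, h12, h2y, hpne⟩ := hD _ hp
    have hcr1 := hNC _ hd _ hp
    have hm := hmax _ hp
    simp only [Finset.mem_union, Finset.mem_filter, D1, D2, D3, E1, E2, E3]
    by_cases he1 : (s, t) = (x, u)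
    · tauto
    by_cases he2 : (s, t) = (u, v)
    · tauto
    by_cases he3 : (s, t) = (v, y)
    · tauto
    simp only [Prod.mk.injEq, not_and] at he1 he2 he3
    simp only [Crosses, not_or, not_and] at hcr1
    have hpne' : ¬(s = x ∧ t = y) := by
      intro h; exact hpne (by rw [h.1, h.2])
    have hm' : t - s ≤ v - u := hm
    have key : t ≤ u ∨ (u ≤ s ∧ t ≤ v) ∨ v ≤ s := by
      by_contra hc
      push_neg at hc
      rcases hcr1 with ⟨c1, c2⟩
      rcases Nat.lt_or_ge s u with hsu | hsu
      · rcases Nat.lt_or_ge t v with htv | htv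
        · -- s < u, u < t (from ¬(t ≤ u)), t < v : crosses pattern 2
          exact (c2 hsu (by omega)) (by omega)
        · -- s < u, t ≥ v : containment, contradicts maximality
          omega
      · rcases Nat.lt_or_ge s v with hsv | hsv
        · rcases Nat.lt_or_ge v t with hvt | hvt
          · have hsu' : u < s := by
              rcases Nat.eq_or_lt_of_le hsu with h | h
              · exfalso; omega
              · exact h
            exact (c1 hsu' hsv) hvt
          · omega
        · omega
    rcases key with h | h | h
    · left; left; left; left; left
      exact ⟨hp, h, by intro hq; injection hq with q1 q2; exact he1 q1 q2⟩
    · left; left; left; left; right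
      exact ⟨hp, h.1, h.2, by intro hq; injection hq with q1 q2; exact he2 q1 q2⟩
    · left; left; left; right
      exact ⟨hp, h, by intro hq; injection hq with q1 q2; exact he3 q1 q2⟩
  have hD1 : D1.card ≤ (u - x) - 2 := by
    apply IH (u - x) (by omega) x
    · intro p hp
      simp only [Finset.mem_filter, D1] at hp
      obtain ⟨hpD, hpu, hpne⟩ := hp
      obtain ⟨h1, h2, h3, _⟩ := hD _ hpD
      have hxu' : x + (u - x) = u := by omega
      rw [hxu']
      exact ⟨h1, h2, hpu, hpne⟩
    · intro p hp q hq
      simp only [Finset.mem_filter, D1] at hp hq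
      exact hNC _ hp.1 _ hq.1
  have hD2 : D2.card ≤ (v - u) - 2 := by
    apply IH (v - u) (by omega) u
    · intro p hp
      simp only [Finset.mem_filter, D2] at hp
      obtain ⟨hpD, hpu, hpv, hpne⟩ := hp
      obtain ⟨h1, h2, h3, _⟩ := hD _ hpD
      have huv' : u + (v - u) = v := by omega
      rw [huv']
      exact ⟨hpu, h2, hpv, hpne⟩
    · intro p hp q hq
      simp only [Finset.mem_filter, D2] at hp hq
      exact hNC _ hp.1 _ hq.1
  have hD3 : D3.card ≤ (y - v) - 2 := by
    apply IH (y - v) (by omega) v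
    · intro p hp
      simp only [Finset.mem_filter, D3] at hp
      obtain ⟨hpD, hpv, hpne⟩ := hp
      obtain ⟨h1, h2, h3, _⟩ := hD _ hpD
      have hvy' : v + (y - v) = y := by omega
      rw [hvy']
      exact ⟨hpv, h2, h3, hpne⟩
    · intro p hp q hq
      simp only [Finset.mem_filter, D3] at hp hq
      exact hNC _ hp.1 _ hq.1
  have hE1 : E1.card ≤ if x + 2 ≤ u then 1 else 0 := by
    split_ifs with h
    · calc E1.card ≤ ({(x, u)} : Finset (ℕ × ℕ)).card := by
            apply Finset.card_le_card
            intro p hp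
            simp only [Finset.mem_filter, E1] at hp
            simp [hp.2]
        _ = 1 := Finset.card_singleton _
    · have : E1 = ∅ := by
        apply Finset.eq_empty_of_forall_notMem
        intro p hp
        simp only [Finset.mem_filter, E1] at hp
        obtain ⟨h1, h2, h3, _⟩ := hD _ hp.1
        rw [hp.2] at h2
        simp at h2; omega
      simp [this]
  have hE2 : E2.card ≤ 1 := by
    calc E2.card ≤ ({(u, v)} : Finset (ℕ × ℕ)).card := by
          apply Finset.card_le_card
          intro p hp
          simp only [Finset.mem_filter, E2] at hp
          simp [hp.2]
      _ = 1 := Finset.card_singleton _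
  have hE3 : E3.card ≤ if v + 2 ≤ y then 1 else 0 := by
    split_ifs with h
    · calc E3.card ≤ ({(v, y)} : Finset (ℕ × ℕ)).card := by
            apply Finset.card_le_card
            intro p hp
            simp only [Finset.mem_filter, E3] at hp
            simp [hp.2]
        _ = 1 := Finset.card_singleton _
    · have : E3 = ∅ := by
        apply Finset.eq_empty_of_forall_notMem
        intro p hp
        simp only [Finset.mem_filter, E3] at hp
        obtain ⟨h1, h2, h3, _⟩ := hD _ hp.1
        rw [hp.2] at h2
        simp at h2; omega
      simp [this]
  have hchain : D.card ≤ D1.card + D2.card + D3.card + E1.card + E2.card + E3.card := by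
    calc D.card ≤ (D1 ∪ D2 ∪ D3 ∪ E1 ∪ E2 ∪ E3).card := Finset.card_le_card hcover
      _ ≤ _ := by
        apply le_trans (Finset.card_union_le _ _)
        gcongr
        apply le_trans (Finset.card_union_le _ _)
        gcongr
        apply le_trans (Finset.card_union_le _ _)
        gcongr
        apply le_trans (Finset.card_union_le _ _)
        gcongr
        exact Finset.card_union_le _ _
  have h1 := hE1; have h3 := hE3
  split_ifs at h1 h3 <;> omega

end GenSun
namespace GenSun
variable {n : ℕ} (T : PolyTriangulation n)

/-- Diagonals strictly within the interval `[a,b]`, excluding the chord `(a,b)`. -/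
def InD (a b : ℕ) : Finset (ℕ × ℕ) :=
  T.diags.filter (fun p => a ≤ p.1 ∧ p.2 ≤ b ∧ p ≠ (a, b))

lemma in_card_le (a b : ℕ) (h : a ≤ b) : (InD T a b).card ≤ (b - a) - 2 := by
  apply cnt (b - a) a
  · intro p hp
    simp only [InD, Finset.mem_filter] at hp
    obtain ⟨hpd, h1, h2, h3⟩ := hp
    have := diag_facts T hpd
    have hab : a + (b - a) = b := by omega
    rw [hab]
    exact ⟨h1, this.1, h2, h3⟩
  · intro p hp q hq
    simp only [InD, Finset.mem_filter] at hp hq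
    exact T.noncross _ hp.1 _ hq.1

lemma out_card_le {a b : ℕ} (hab : (a, b) ∈ T.diags) :
    (T.diags.filter (fun p => ¬(a ≤ p.1 ∧ p.2 ≤ b))).card ≤ (n - b + a) - 2 := by
  classical
  obtain ⟨hab2, habn, hbn⟩ := diag_facts T hab
  set Out := T.diags.filter (fun p => ¬(a ≤ p.1 ∧ p.2 ≤ b)) with hOut
  set k := b - a - 1 with hk
  set φ : ℕ → ℕ := fun j => if j ≤ a then j else j - k with hφ
  have hdom : ∀ q ∈ Out, (q.2 ≤ a ∨ b ≤ q.1 ∨ (q.1 ≤ a ∧ b ≤ q.2)) ∧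
      q.1 + 2 ≤ q.2 ∧ q.2 < n ∧ ¬(q.1 = a ∧ q.2 = b) ∧ q ∈ T.diags := by
    intro q hq
    simp only [Finset.mem_filter, Out] at hq
    obtain ⟨hqd, hqc⟩ := hq
    have hq2 := diag_facts T hqd
    have hnc := T.noncross _ hab _ hqd
    obtain ⟨s, t⟩ := q
    have hne : ¬(s = a ∧ t = b) := by
      intro h; rw [h.1, h.2] at hqc; simp at hqc
    simp only [Crosses, not_or] at hnc
    simp only at hq2 hqc hne ⊢
    refine ⟨by omega, by omega, by omega, hne, hqd⟩
  have hrefl : ∀ s t : ℕ, (s ≤ a ∨ b ≤ s) → (t ≤ a ∨ b ≤ t) → φ s < φ t → s < t := by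
    intro s t hs ht
    simp only [φ]; split_ifs <;> omega
  have hinjφ : ∀ s t : ℕ, (s ≤ a ∨ b ≤ s) → (t ≤ a ∨ b ≤ t) → φ s = φ t → s = t := by
    intro s t hs ht; simp only [φ]; split_ifs <;> omega
  have hdom1 : ∀ q ∈ Out, (q.1 ≤ a ∨ b ≤ q.1) ∧ (q.2 ≤ a ∨ b ≤ q.2) := by
    intro q hq
    have := (hdom q hq)
    omega
  have hcard : Out.card = (Out.image (fun p => (φ p.1, φ p.2))).card := by
    rw [Finset.card_image_of_injOn]
    intro p hp q hq heq
    have hp' := hdom1 p (Finset.mem_coe.1 hp)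
    have hq' := hdom1 q (Finset.mem_coe.1 hq)
    injection heq with e1 e2
    have := hinjφ _ _ hp'.1 hq'.1 e1
    have := hinjφ _ _ hp'.2 hq'.2 e2
    exact Prod.ext_iff.2 ⟨by assumption, by assumption⟩
  rw [hcard]
  apply cnt (n - b + a) 0
  · intro p' hp'
    obtain ⟨q, hq, rfl⟩ := Finset.mem_image.1 hp'
    obtain ⟨htri, hgap, hqn, hne, hqd⟩ := hdom q hq
    have hwrap : ¬(q.1 = 0 ∧ q.2 = n - 1) := by
      intro h
      apply not_mem_wrap T (n := n) (by omega)
      have : q = (0, n - 1) := Prod.ext_iff.2 ⟨h.1, h.2⟩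
      rwa [this] at hqd
    simp only [φ]
    refine ⟨by omega, ?_, ?_, ?_⟩
    · split_ifs <;> omega
    · split_ifs <;> omega
    · intro hc
      injection hc with c1 c2
      split_ifs at c1 c2 <;> omega
  · intro p' hp' q' hq'
    obtain ⟨p, hp, rfl⟩ := Finset.mem_image.1 hp'
    obtain ⟨q, hq, rfl⟩ := Finset.mem_image.1 hq'
    intro hcr
    apply T.noncross p (hdom p hp).2.2.2.2 q (hdom q hq).2.2.2.2
    have dp := hdom1 p hp
    have dq := hdom1 q hq
    simp only [Crosses] at hcr ⊢
    rcases hcr with ⟨h1, h2, h3⟩ | ⟨h1, h2, h3⟩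
    · exact Or.inl ⟨hrefl _ _ dp.1 dq.1 h1, hrefl _ _ dq.1 dp.2 h2, hrefl _ _ dp.2 dq.2 h3⟩
    · exact Or.inr ⟨hrefl _ _ dq.1 dp.1 h1, hrefl _ _ dp.1 dq.2 h2, hrefl _ _ dq.2 dp.2 h3⟩

lemma in_card_eq {a b : ℕ} (hab : (a, b) ∈ T.diags) :
    (InD T a b).card = (b - a) - 2 := by
  classical
  obtain ⟨hab2, habn, hbn⟩ := diag_facts T hab
  have hle := in_card_le T a b (by omega)
  have hout := out_card_le T hab
  have hn3 : 3 ≤ n := by omega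
  have hcover : T.diags ⊆ InD T a b ∪ T.diags.filter (fun p => ¬(a ≤ p.1 ∧ p.2 ≤ b)) ∪ {(a, b)} := by
    intro p hp
    simp only [Finset.mem_union, Finset.mem_filter, Finset.mem_singleton, InD]
    by_cases h1 : p = (a, b)
    · tauto
    by_cases h2 : a ≤ p.1 ∧ p.2 ≤ b
    · exact Or.inl (Or.inl ⟨hp, h2.1, h2.2, h1⟩)
    · exact Or.inl (Or.inr ⟨hp, h2⟩)
  have hcard : T.diags.card ≤ (InD T a b).card +
      (T.diags.filter (fun p => ¬(a ≤ p.1 ∧ p.2 ≤ b))).card + 1 := by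
    calc T.diags.card ≤ _ := Finset.card_le_card hcover
      _ ≤ _ := by
        apply le_trans (Finset.card_union_le _ _)
        have := Finset.card_union_le (InD T a b) (T.diags.filter (fun p => ¬(a ≤ p.1 ∧ p.2 ≤ b)))
        simp only [Finset.card_singleton]
        omega
  rw [T.card_eq] at hcard
  omega

def EdgeOK (a b : ℕ) : Prop := (a, b) ∈ T.diags ∨ (a = 0 ∧ b = n - 1)

lemma in_card_eq' {a b : ℕ} (hn : 3 ≤ n) (hab : EdgeOK T a b) (h2 : a + 2 ≤ b) :
    (InD T a b).card = (b - a) - 2 := by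
  rcases hab with hab | ⟨rfl, rfl⟩
  · exact in_card_eq T hab
  · have : InD T 0 (n - 1) = T.diags := by
      ext p
      simp only [InD, Finset.mem_filter]
      constructor
      · tauto
      · intro hp
        have := diag_facts T hp
        refine ⟨hp, by omega, by omega, ?_⟩
        intro h
        rw [h] at hp
        exact not_mem_wrap T (by omega) hp
    rw [this, T.card_eq]
    omega

end GenSun
namespace GenSun
variable {n : ℕ} (T : PolyTriangulation n)

/-- Every edge of the triangulation with a nontrivial right side has a triangle on it. -/
lemma tri {a b : ℕ} (hn : 3 ≤ n) (hab : EdgeOK T a b) (h2 : a + 2 ≤ b) :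
    ∃ t, a < t ∧ t < b ∧ (t = a + 1 ∨ (a, t) ∈ T.diags) ∧ (b = t + 1 ∨ (t, b) ∈ T.diags) := by
  classical
  set W := (Finset.range b).filter (fun w => a < w ∧ (w = a + 1 ∨ (a, w) ∈ T.diags)) with hW
  have hW1 : a + 1 ∈ W := by
    simp only [W, Finset.mem_filter, Finset.mem_range]
    exact ⟨by omega, by omega, Or.inl trivial⟩
  have hWne : W.Nonempty := ⟨a + 1, hW1⟩
  set t := W.max' hWne with ht
  have htW : t ∈ W := W.max'_mem hWne
  have htmax : ∀ w ∈ W, w ≤ t := fun w hw => W.le_max' w hw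
  simp only [W, Finset.mem_filter, Finset.mem_range] at htW
  obtain ⟨htb, hat, hedge⟩ := htW
  refine ⟨t, hat, htb, hedge, ?_⟩
  by_cases hb1 : b = t + 1
  · exact Or.inl hb1
  right
  by_contra htbd
  have hineq := in_card_eq' T hn hab h2
  have hle1 := in_card_le T a t (by omega)
  have hle2 := in_card_le T t b (by omega)
  set F := T.diags.filter (· = (a, t)) with hF
  have hcover : InD T a b ⊆ InD T a t ∪ F ∪ InD T t b := by
    intro q hq
    simp only [InD, Finset.mem_filter, Finset.mem_union, F] at hq ⊢
    obtain ⟨hqd, hqa, hqb, hqne⟩ := hq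
    by_cases hq1 : q = (a, t)
    · exact Or.inl (Or.inr ⟨hqd, hq1⟩)
    obtain ⟨s, u⟩ := q
    simp only at hqa hqb ⊢
    have hgap := diag_facts T hqd
    simp only at hgap
    have hcase : u ≤ t ∨ t ≤ s := by
      by_contra hc
      push_neg at hc
      obtain ⟨hut, hst⟩ := hc
      by_cases hsa : s = a
      · subst hsa
        have hub : u < b := by
          rcases Nat.eq_or_lt_of_le hqb with h | h
          · exfalso; apply hqne; rw [h]
          · exact h
        have huW : u ∈ W := by
          simp only [W, Finset.mem_filter, Finset.mem_range]
          exact ⟨hub, by omega, Or.inr hqd⟩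
        have := htmax _ huW
        omega
      · have hsa' : a < s := by omega
        rcases hedge with h1 | h1
        · omega
        · exact T.noncross _ h1 _ hqd (Or.inl ⟨hsa', hst, hut⟩)
    rcases hcase with h | h
    · left; left
      refine ⟨hqd, hqa, h, ?_⟩
      intro hc; exact hq1 hc
    · right
      refine ⟨hqd, h, hqb, ?_⟩
      intro hc
      rw [hc] at hqd
      exact htbd hqd
  have hFcard : F.card ≤ if t = a + 1 then 0 else 1 := by
    split_ifs with h
    · have : F = ∅ := by
        apply Finset.eq_empty_of_forall_notMem
        intro p hp
        simp only [F, Finset.mem_filter] at hp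
        have := diag_facts T hp.1
        rw [hp.2] at this
        simp only at this
        omega
      simp [this]
    · calc F.card ≤ ({(a, t)} : Finset (ℕ × ℕ)).card := by
            apply Finset.card_le_card
            intro p hp
            simp only [F, Finset.mem_filter] at hp
            simp [hp.2]
        _ = 1 := Finset.card_singleton _
  have hcard : (InD T a b).card ≤ (InD T a t).card + F.card + (InD T t b).card := by
    calc (InD T a b).card ≤ _ := Finset.card_le_card hcover
      _ ≤ _ := by
        apply le_trans (Finset.card_union_le _ _)
        have := Finset.card_union_le (InD T a t) F
        omega
  split_ifs at hFcard <;> omega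

end GenSun
namespace GenSun
variable {n : ℕ} (T : PolyTriangulation n)

/-- cyclic successor value -/
def sv {n : ℕ} (v : Fin n) : ℕ := if v.val = n - 1 then 0 else v.val + 1

/-- cyclic predecessor value -/
def pv {n : ℕ} (v : Fin n) : ℕ := if v.val = 0 then n - 1 else v.val - 1

lemma sv_lt (hn : 1 ≤ n) (v : Fin n) : sv v < n := by
  have := v.isLt; unfold sv; split_ifs <;> omega

lemma pv_lt (hn : 1 ≤ n) (v : Fin n) : pv v < n := by
  have := v.isLt; unfold pv; split_ifs <;> omega

lemma adj_congr {x y x' y' : Fin n} (h : T.graph.Adj x y)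
    (hx : x.val = x'.val) (hy : y.val = y'.val) : T.graph.Adj x' y' := by
  obtain rfl : x = x' := Fin.ext hx
  obtain rfl : y = y' := Fin.ext hy
  exact h

lemma edgeE_adj {a b : ℕ} (h : b = a + 1 ∨ (a, b) ∈ T.diags) (hab : a < b) (hb : b < n) :
    T.graph.Adj ⟨a, by omega⟩ ⟨b, hb⟩ := by
  rcases h with h | h
  · subst h; exact adj_succ T hb
  · exact adj_of_diag T h (by omega) hb

lemma edgeOK_adj {a b : ℕ} (hn : 3 ≤ n) (h : EdgeOK T a b) (h2 : a < b) (hb : b ≤ n - 1) :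
    T.graph.Adj ⟨a, by omega⟩ ⟨b, by omega⟩ := by
  rcases h with h | ⟨rfl, rfl⟩
  · exact adj_of_diag T h (by omega) (by omega)
  · exact adj_congr T (adj_wrap T (by omega)) rfl rfl

lemma adj_sv (hn : 2 ≤ n) (v : Fin n) :
    T.graph.Adj v ⟨sv v, sv_lt (by omega) v⟩ := by
  have hv := v.isLt
  by_cases h : v.val = n - 1
  · have hsv : sv v = 0 := by unfold sv; rw [if_pos h]
    exact adj_congr T (adj_wrap T hn).symm (by simp [h]) (by simp [hsv])
  · have hsv : sv v = v.val + 1 := by unfold sv; rw [if_neg h]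
    exact adj_congr T (adj_succ T (a := v.val) (by omega)) rfl (by simp [hsv])

lemma adj_pv (hn : 2 ≤ n) (v : Fin n) :
    T.graph.Adj v ⟨pv v, pv_lt (by omega) v⟩ := by
  have hv := v.isLt
  by_cases h : v.val = 0
  · have hpv : pv v = n - 1 := by unfold pv; rw [if_pos h]
    exact adj_congr T (adj_wrap T hn) (by simp [h]) (by simp [hpv])
  · have hpv : pv v = v.val - 1 := by unfold pv; rw [if_neg h]
    exact adj_congr T (adj_succ T (a := v.val - 1) (by omega)).symm
      (by simp; omega) (by simp [hpv])

lemma pv_ne_sv (hn : 3 ≤ n) (v : Fin n) : pv v ≠ sv v := by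
  have := v.isLt; unfold pv sv; split_ifs <;> omega

lemma deg2_nbrs (hn : 3 ≤ n) {v : Fin n} (hv : pdeg T v = 2) :
    T.graph.neighborSet v =
      {(⟨pv v, pv_lt (by omega) v⟩ : Fin n), ⟨sv v, sv_lt (by omega) v⟩} := by
  have hsub : ({(⟨pv v, pv_lt (by omega) v⟩ : Fin n), ⟨sv v, sv_lt (by omega) v⟩} : Set (Fin n))
      ⊆ T.graph.neighborSet v := by
    intro u hu
    rcases hu with h | h
    · rw [h]; exact adj_pv T (by omega) v
    · rw [Set.mem_singleton_iff] at h; rw [h]; exact adj_sv T (by omega) v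
  have hne : (⟨pv v, pv_lt (by omega) v⟩ : Fin n) ≠ ⟨sv v, sv_lt (by omega) v⟩ := by
    intro h
    exact pv_ne_sv hn v (congrArg Fin.val h)
  symm
  apply Set.eq_of_subset_of_ncard_le hsub
  rw [Set.ncard_pair hne]
  unfold pdeg at hv
  omega

lemma deg2_adj {v u : Fin n} (hn : 3 ≤ n) (hv : pdeg T v = 2) (h : T.graph.Adj v u) :
    u.val = pv v ∨ u.val = sv v := by
  have : u ∈ T.graph.neighborSet v := h
  rw [deg2_nbrs T hn hv] at this
  rcases this with h | h
  · left; rw [h]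
  · rw [Set.mem_singleton_iff] at h; right; rw [h]

lemma tb : ∀ len : ℕ, ∀ a b : ℕ, b = a + len → EdgeOK T a b → b ≤ n - 1 → 2 ≤ len →
    ∀ i, a ≤ i → i + 1 ≤ b → ∀ (hi : i < n) (hi1 : i + 1 < n),
    ∃ t : Fin n, t.val ≠ i ∧ t.val ≠ i + 1 ∧
      T.graph.Adj t ⟨i, hi⟩ ∧ T.graph.Adj t ⟨i + 1, hi1⟩ := by
  intro len
  induction len using Nat.strong_induction_on with
  | _ len IH =>
  intro a b hb hOK hbn hlen2 i hai hib hi hi1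
  have hn3 : 3 ≤ n := by omega
  obtain ⟨t₀, hat, htb, he1, he2⟩ := tri T hn3 hOK (by omega)
  by_cases hcase : i + 1 ≤ t₀
  · rcases he1 with h1 | h1
    · -- t₀ = a + 1, so i = a, i + 1 = t₀ ; take t = b
      have hia : i = a := by omega
      refine ⟨⟨b, by omega⟩, by show b ≠ i; omega, by show b ≠ i + 1; omega, ?_, ?_⟩
      · exact adj_congr T (edgeOK_adj T hn3 hOK (by omega) hbn).symm rfl (by simp; omega)
      · exact adj_congr T (edgeE_adj T he2 (by omega) (by omega)).symm rfl (by simp; omega)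
    · exact IH (t₀ - a) (by omega) a t₀ (by omega) (Or.inl h1) (by omega)
        (by have := diag_facts T h1; omega) i hai hcase hi hi1
  · push_neg at hcase
    have hti : t₀ ≤ i := by omega
    rcases he2 with h2 | h2
    · -- b = t₀ + 1, so i = t₀ ; take t = a
      have hit : i = t₀ := by omega
      refine ⟨⟨a, by omega⟩, by show a ≠ i; omega, by show a ≠ i + 1; omega, ?_, ?_⟩
      · exact adj_congr T (edgeE_adj T he1 (by omega) (by omega)) rfl (by simp; omega)
      · exact adj_congr T (edgeOK_adj T hn3 hOK (by omega) hbn) rfl (by simp; omega)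
    · exact IH (b - t₀) (by omega) t₀ b (by omega) (Or.inl h2) hbn
        (by have := diag_facts T h2; omega) i hti hib hi hi1

/-- every cyclic boundary edge `{v, v+1}` lies in a triangle -/
lemma boundary_tri (hn : 3 ≤ n) (v : Fin n) :
    ∃ t : Fin n, t ≠ v ∧ t.val ≠ sv v ∧ T.graph.Adj t v ∧
      T.graph.Adj t ⟨sv v, sv_lt (by omega) v⟩ := by
  have hv := v.isLt
  by_cases h : v.val = n - 1
  · obtain ⟨t₀, h0t, htn, he1, he2⟩ := tri T hn (Or.inr ⟨rfl, rfl⟩) (by omega)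
    have hsv : sv v = 0 := by unfold sv; rw [if_pos h]
    refine ⟨⟨t₀, by omega⟩, ?_, ?_, ?_, ?_⟩
    · intro hc; have := congrArg Fin.val hc; simp [h] at this; omega
    · rw [hsv]; show t₀ ≠ 0; omega
    · exact adj_congr T (edgeE_adj T he2 (by omega) (by omega)) rfl (by simp [h])
    · exact adj_congr T (edgeE_adj T he1 (by omega) (by omega)).symm rfl (by simp [hsv])
  · have hsv : sv v = v.val + 1 := by unfold sv; rw [if_neg h]
    obtain ⟨t, ht1, ht2, ht3, ht4⟩ := tb T (n - 1) 0 (n - 1) (by omega) (Or.inr ⟨rfl, rfl⟩)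
      (le_refl _) (by omega) v.val (by omega) (by omega) hv (by omega)
    refine ⟨t, ?_, ?_, ?_, ?_⟩
    · intro hc; exact ht1 (congrArg Fin.val hc)
    · rw [hsv]; exact ht2
    · exact adj_congr T ht3 rfl rfl
    · exact adj_congr T ht4 rfl (by simp [hsv])

end GenSun
namespace GenSun
variable {n : ℕ} (T : PolyTriangulation n)

lemma off_eq (v u : Fin n) : (u.val + n - v.val) % n =
    if v.val ≤ u.val then u.val - v.val else u.val + n - v.val :=
  mod_helper v.isLt u.isLt

lemma off_sv (hn : 2 ≤ n) (v : Fin n) : ((sv v : ℕ) + n - v.val) % n = 1 := by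
  have hv := v.isLt
  unfold sv
  split_ifs with h
  · rw [mod_helper (by omega) (by omega)]
    split_ifs <;> omega
  · rw [mod_helper (by omega) (by omega)]
    split_ifs <;> omega

lemma off_of_sv (hn : 2 ≤ n) (v : Fin n) : (v.val + n - sv v) % n = n - 1 := by
  have hv := v.isLt
  unfold sv
  split_ifs with h
  · rw [mod_helper (by omega) (by omega)]
    split_ifs <;> omega
  · rw [mod_helper (by omega) (by omega)]
    split_ifs <;> omega

lemma pv_sv (hn : 2 ≤ n) (v : Fin n) : pv (⟨sv v, sv_lt (by omega) v⟩ : Fin n) = v.val := by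
  have hv := v.isLt
  unfold pv sv
  split_ifs <;> simp_all <;> omega

/-- no two cyclically-consecutive vertices are both special -/
lemma spec_indep (hn : 6 ≤ n) (hn4 : n % 4 = 2) (v : Fin n)
    (h1 : pdeg T v = 2 ∨ IsCentral T v)
    (h2 : pdeg T ⟨sv v, sv_lt (by omega) v⟩ = 2 ∨
          IsCentral T ⟨sv v, sv_lt (by omega) v⟩) : False := by
  have hv := v.isLt
  set w : Fin n := ⟨sv v, sv_lt (by omega) v⟩ with hw
  have hadj : T.graph.Adj v w := adj_sv T (by omega) v
  rcases h2 with h2 | h2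
  · -- w has degree 2
    rcases h1 with h1 | h1
    · -- both degree 2 : use a triangle on the edge {v, w}
      obtain ⟨t, htv, htsv, hta, htb⟩ := boundary_tri T (by omega) v
      have htval : t.val ≠ v.val := fun h => htv (Fin.ext h)
      have hd1 := deg2_adj T (by omega) h1 hta.symm
      have hd2 := deg2_adj T (by omega) h2 htb.symm
      have hpvw : pv w = v.val := pv_sv (by omega) v
      rcases hd1 with hd1 | hd1
      · rcases hd2 with hd2 | hd2
        · rw [hpvw] at hd2; exact htval hd2
        · -- pv v = sv w : impossible for n ≥ 4
          rw [hd1] at hd2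
          unfold pv sv at hd2
          simp only [hw] at hd2
          unfold sv at hd2
          split_ifs at hd2 <;> omega
      · exact htsv hd1
    · -- v central, w degree 2
      exact h1.1 w (Or.inr hadj) h2
  · -- w central
    rcases h1 with h1 | h1
    · exact h2.1 v (Or.inr hadj.symm) h1
    · -- both central
      obtain ⟨t, htv, htsv, hta, htb⟩ := boundary_tri T (by omega) v
      have htval : t.val ≠ v.val := fun h => htv (Fin.ext h)
      have ht := t.isLt
      have ho1 := h1.2 t w hta.symm hadj
      have ho2 := h2.2 t v htb.symm hadj.symm
      rw [off_sv (by omega) v] at ho1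
      rw [show (v.val + n - w.val) % n = n - 1 from off_of_sv (by omega) v] at ho2
      rw [off_eq] at ho1 ho2
      have htw : t.val ≠ w.val := htsv
      have hcase : (v.val = n - 1 ∧ w.val = 0) ∨ (v.val < n - 1 ∧ w.val = v.val + 1) := by
        have hww : w.val = sv v := rfl
        unfold sv at hww
        split_ifs at hww <;> omega
      rcases hcase with ⟨hv1, hw1⟩ | ⟨hv1, hw1⟩ <;>
        rw [hw1] at ho2 htw <;>
        split_ifs at ho1 ho2 <;> omega
  
end GenSun
namespace GenSun
variable {n : ℕ} (T : PolyTriangulation n)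

lemma spec_parity (hn : 6 ≤ n) (hs : IsGenSun T) :
    ∃ ρ, ρ ≤ 1 ∧ ∀ v : Fin n, (pdeg T v = 2 ∨ IsCentral T v) ↔ v.val % 2 = ρ := by
  classical
  have hn4 := hs.1
  set Spec : Set (Fin n) := {v | pdeg T v = 2 ∨ IsCentral T v} with hSpec
  have hdisj : Disjoint {v : Fin n | pdeg T v = 2} {v : Fin n | IsCentral T v} := by
    rw [Set.disjoint_left]
    intro v hv hc
    exact hc.1 v (Or.inl rfl) hv
  have hcard : Spec.ncard = n / 2 := by
    have hunion : Spec = {v : Fin n | pdeg T v = 2} ∪ {v : Fin n | IsCentral T v} := rfl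
    rw [hunion, Set.ncard_union_eq hdisj (Set.toFinite _) (Set.toFinite _)]
    exact hs.2
  have hfin := Spec.toFinite
  set Sf : Finset (Fin n) := hfin.toFinset with hSf
  have hmemSf : ∀ v : Fin n, v ∈ Sf ↔ v ∈ Spec := fun v => hfin.mem_toFinset
  have hSfcard : Sf.card = n / 2 := by
    rw [← hcard, Set.ncard_eq_toFinset_card _ hfin]
  set g : Fin n → Fin n := fun v => ⟨sv v, sv_lt (by omega) v⟩ with hg
  have hginj : Function.Injective g := by
    intro a b h
    have hh : sv a = sv b := congrArg Fin.val h
    have ha := a.isLt; have hb := b.isLt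
    apply Fin.ext
    unfold sv at hh
    split_ifs at hh <;> omega
  set Sf' : Finset (Fin n) := Sf.image g with hSf'
  have hcard' : Sf'.card = n / 2 := by
    rw [hSf', Finset.card_image_of_injective _ hginj, hSfcard]
  have hdisj2 : Disjoint Sf Sf' := by
    rw [Finset.disjoint_right]
    intro a ha hha
    obtain ⟨b, hb, rfl⟩ := Finset.mem_image.1 ha
    exact spec_indep T hn hn4 b ((hmemSf b).1 hb) ((hmemSf _).1 hha)
  have huniv : Sf ∪ Sf' = Finset.univ := by
    apply Finset.eq_univ_of_card
    rw [Finset.card_union_of_disjoint hdisj2, hSfcard, hcard', Fintype.card_fin]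
    omega
  have key : ∀ u : Fin n, u ∈ Spec ↔ g u ∉ Spec := by
    intro u
    constructor
    · intro h1 h2
      exact spec_indep T hn hn4 u h1 h2
    · intro h2
      have hm : g u ∈ Sf ∪ Sf' := huniv ▸ Finset.mem_univ _
      rcases Finset.mem_union.1 hm with h | h
      · exact absurd ((hmemSf _).1 h) h2
      · obtain ⟨b, hb, hgb⟩ := Finset.mem_image.1 h
        obtain rfl : b = u := hginj hgb
        exact (hmemSf _).1 hb
  set ρ : ℕ := if (⟨0, by omega⟩ : Fin n) ∈ Spec then 0 else 1 with hρ
  have hρ1 : ρ ≤ 1 := by rw [hρ]; split_ifs <;> omega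
  have hchar : ∀ k, ∀ hk : k < n, ((⟨k, hk⟩ : Fin n) ∈ Spec ↔ k % 2 = ρ) := by
    intro k
    induction k using Nat.strong_induction_on with
    | _ k IH =>
    intro hk
    rcases Nat.eq_zero_or_pos k with rfl | hpos
    · by_cases h0 : (⟨0, by omega⟩ : Fin n) ∈ Spec
      · rw [hρ, if_pos h0]
        exact ⟨fun _ => by omega, fun _ => h0⟩
      · rw [hρ, if_neg h0]
        exact ⟨fun h => absurd h h0, fun h => by omega⟩
    · have hg1 : g ⟨k - 1, by omega⟩ = ⟨k, hk⟩ := by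
        apply Fin.ext
        show (if k - 1 = n - 1 then 0 else k - 1 + 1) = k
        split_ifs with h <;> omega
      have h1 := key ⟨k - 1, by omega⟩
      rw [hg1] at h1
      have h2 := IH (k - 1) (by omega) (by omega)
      have h3 : (⟨k, hk⟩ : Fin n) ∈ Spec ↔ ¬((k - 1) % 2 = ρ) := by
        constructor
        · intro hA hP
          exact (h1.1 (h2.2 hP)) hA
        · intro hnP
          by_contra hnA
          exact hnP (h2.1 (h1.2 hnA))
      rw [h3]
      omega
  exact ⟨ρ, hρ1, fun v => hchar v.val v.isLt⟩

end GenSun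
namespace GenSun
variable {n : ℕ} (T : PolyTriangulation n)

lemma adj_elim_mk {x y : ℕ} (hx : x < n) (hy : y < n) (hxy : x < y)
    (h : T.graph.Adj ⟨x, hx⟩ ⟨y, hy⟩) :
    y = x + 1 ∨ (x = 0 ∧ y = n - 1) ∨ (x, y) ∈ T.diags :=
  adj_elim T hxy h

lemma pv_mk {t : ℕ} (h : t < n) : pv (⟨t, h⟩ : Fin n) = if t = 0 then n - 1 else t - 1 := rfl
lemma sv_mk {t : ℕ} (h : t < n) : sv (⟨t, h⟩ : Fin n) = if t = n - 1 then 0 else t + 1 := rfl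

lemma bool_key : ∀ x y z : Bool, (x = z) ↔ ((x = y) ↔ (y = z)) := by decide

set_option maxHeartbeats 2000000 in
/-- MAIN LEMMA : for a diagonal `(a,b)` with both endpoints of non-special parity,
the colors of the endpoints agree iff the length is divisible by 4. -/
lemma main (hn : 6 ≤ n) (hn4 : n % 4 = 2) (c : Fin n → Bool) (ρ : ℕ) (hρ1 : ρ ≤ 1)
    (hspec : ∀ v : Fin n, (pdeg T v = 2 ∨ IsCentral T v) ↔ v.val % 2 = ρ)
    (hsat : ∀ v : Fin n, (pdeg T v = 2 ∨ IsCentral T v) →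
      (∃ u, T.graph.Adj v u ∧ c u = true) ∧ (∃ u, T.graph.Adj v u ∧ c u = false)) :
    ∀ len : ℕ, ∀ a b : ℕ, ∀ (hab : b = a + len) (hbn : b ≤ n - 1) (hpa : a % 2 ≠ ρ)
    (hpb : b % 2 ≠ ρ) (hd : (a, b) ∈ T.diags),
    ((c ⟨a, by omega⟩ = c ⟨b, by omega⟩) ↔ len % 4 = 0) := by
  intro len
  induction len using Nat.strong_induction_on with
  | _ len IH =>
  intro a b hab hbn hpa hpb hd
  classical
  have hgap := diag_facts T hd
  have hlen2 : 2 ≤ len := by omega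
  rcases Nat.eq_or_lt_of_le hlen2 with hlen2' | hlen4
  · -- base case : len = 2, the middle vertex is special with nbrs exactly a, b
    have hb2 : b = a + 2 := by omega
    have hmval : (a + 1) % 2 = ρ := by omega
    set m : Fin n := ⟨a + 1, by omega⟩ with hm
    have hmspec := (hspec m).2 hmval
    have hnbrs : ∀ u : Fin n, T.graph.Adj m u → u.val = a ∨ u.val = b := by
      intro u hu
      rcases Nat.lt_trichotomy u.val (a + 1) with h | h | h
      · rcases adj_elim_mk T u.isLt (by omega) (x := u.val) (y := a + 1) h
          (by exact hu.symm) with h1 | h1 | h1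
        · left; omega
        · omega
        · by_cases hua : u.val = a
          · left; exact hua
          · exfalso
            exact T.noncross _ hd _ h1 (Or.inr ⟨by omega, by omega, by omega⟩)
      · exfalso
        have : u = m := Fin.ext h
        rw [this] at hu
        exact T.graph.loopless.irrefl _ hu
      · rcases adj_elim_mk T (by omega) u.isLt (x := a + 1) (y := u.val) h
          (by exact hu) with h1 | h1 | h1
        · right; omega
        · omega
        · by_cases hub : u.val = b
          · right; exact hub
          · exfalso
            have hub' : b < u.val := by
              by_contra hc
              push_neg at hc
              have := diag_facts T h1
              omega
            exact T.noncross _ hd _ h1 (Or.inl ⟨by omega, by omega, by omega⟩)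
    obtain ⟨⟨u1, hu1a, hu1c⟩, ⟨u2, hu2a, hu2c⟩⟩ := hsat m hmspec
    have hcab : c ⟨a, by omega⟩ ≠ c ⟨b, by omega⟩ := by
      intro heq
      have e1 : c u1 = c u2 := by
        have h1 := hnbrs u1 hu1a
        have h2 := hnbrs u2 hu2a
        rcases h1 with h | h <;> rcases h2 with h' | h' <;>
          rw [show u1 = (⟨u1.val, u1.isLt⟩ : Fin n) from rfl,
              show u2 = (⟨u2.val, u2.isLt⟩ : Fin n) from rfl] <;>
          simp only [h, h'] <;>
          first | rfl | exact heq | exact heq.symm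
      rw [hu1c, hu2c] at e1
      simp at e1
    constructor
    · intro heq; exact absurd heq hcab
    · intro hmod; exact absurd hmod (by omega)
  · -- inductive case : len ≥ 4
    obtain ⟨t, hat, htb, he1, he2⟩ := tri T (by omega) (Or.inl hd) (by omega)
    by_cases hts : t % 2 = ρ
    case neg =>
      have ht1 : (a, t) ∈ T.diags := by
        rcases he1 with h | h
        · exfalso; omega
        · exact h
      have ht2 : (t, b) ∈ T.diags := by
        rcases he2 with h | h
        · exfalso; omega
        · exact h
      have i1 := IH (t - a) (by omega) a t (by omega) (by omega) hpa hts ht1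
      have i2 := IH (b - t) (by omega) t b (by omega) hbn hts hpb ht2
      rw [bool_key (c ⟨a, by omega⟩) (c ⟨t, by omega⟩) (c ⟨b, by omega⟩), i1, i2]
      have hp1 : (t - a) % 2 = 0 := by omega
      have hp2 : (b - t) % 2 = 0 := by omega
      omega
    case pos =>
      have htlt : t < n := by omega
      have hta : T.graph.Adj ⟨a, by omega⟩ ⟨t, htlt⟩ := edgeE_adj T he1 hat htlt
      have htbadj : T.graph.Adj ⟨t, htlt⟩ ⟨b, by omega⟩ := edgeE_adj T he2 htb (by omega)
      have htspec := (hspec ⟨t, htlt⟩).2 hts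
      have hcentral : IsCentral T ⟨t, htlt⟩ := by
        rcases htspec with h2 | hcent
        · exfalso
          have hda : a = pv (⟨t, htlt⟩ : Fin n) ∨ a = sv (⟨t, htlt⟩ : Fin n) :=
            deg2_adj T (by omega) h2 hta.symm
          have hdb : b = pv (⟨t, htlt⟩ : Fin n) ∨ b = sv (⟨t, htlt⟩ : Fin n) :=
            deg2_adj T (by omega) h2 htbadj
          rw [pv_mk, sv_mk] at hda hdb
          split_ifs at hda hdb <;> omega
        · exact hcent
      -- all neighbors of t lie in [a, b]
      have hnbr_range : ∀ u : Fin n, T.graph.Adj ⟨t, htlt⟩ u → a ≤ u.val ∧ u.val ≤ b := by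
        intro u hu
        rcases Nat.lt_trichotomy u.val t with h | h | h
        · refine ⟨?_, by omega⟩
          by_contra hua
          push_neg at hua
          rcases adj_elim_mk T u.isLt htlt (x := u.val) (y := t) h (by exact hu.symm)
            with h1 | h1 | h1
          · omega
          · omega
          · exact T.noncross _ hd _ h1 (Or.inr ⟨by omega, by omega, by omega⟩)
        · exfalso
          have : u = ⟨t, htlt⟩ := Fin.ext h
          rw [this] at hu
          exact T.graph.loopless.irrefl _ hu
        · refine ⟨by omega, ?_⟩
          by_contra hub
          push_neg at hub
          rcases adj_elim_mk T htlt u.isLt (x := t) (y := u.val) h (by exact hu)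
            with h1 | h1 | h1
          · omega
          · omega
          · exact T.noncross _ hd _ h1 (Or.inl ⟨by omega, by omega, by omega⟩)
      -- all neighbors of t sit at cyclic offset ≡ 1 (mod 4)
      have hoff : ∀ u : Fin n, T.graph.Adj ⟨t, htlt⟩ u →
          (t < u.val → (u.val - t) % 4 = 1) ∧ (u.val < t → (t - u.val) % 4 = 1) := by
        intro u hu
        have hsucc : T.graph.Adj ⟨t, htlt⟩ ⟨t + 1, by omega⟩ := adj_succ T (by omega)
        have h1 : ((u.val + n - t) % n) % 4 = ((t + 1 + n - t) % n) % 4 :=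
          hcentral.2 u ⟨t + 1, by omega⟩ hu hsucc
        have hr : ((t + 1 + n - t) % n) % 4 = 1 := by
          rw [show t + 1 + n - t = 1 + n from by omega, Nat.add_mod_right]
          rw [Nat.mod_eq_of_lt (show (1:ℕ) < n from by omega)]
        rw [hr, mod_helper htlt u.isLt] at h1
        constructor
        · intro hlt
          split_ifs at h1 with hc
          · exact h1
          · omega
        · intro hlt
          split_ifs at h1 with hc
          · omega
          · omega
      -- right chain : every neighbor w > t has c w = c b
      have chainR : ∀ k : ℕ, ∀ w : ℕ, b - w = k → t < w → w ≤ b → ∀ hw : w < n,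
          T.graph.Adj ⟨t, htlt⟩ ⟨w, hw⟩ → c ⟨w, hw⟩ = c ⟨b, by omega⟩ := by
        intro k
        induction k using Nat.strong_induction_on with
        | _ k IHk =>
        intro w hk htw hwb hw hadjw
        rcases Nat.eq_or_lt_of_le hwb with rfl | hwb'
        · rfl
        · set W' := (Finset.range (b + 1)).filter
            (fun z => w < z ∧ ∃ hz : z < n, T.graph.Adj ⟨t, htlt⟩ ⟨z, hz⟩) with hW'
          have hbW : b ∈ W' := by
            simp only [W', Finset.mem_filter, Finset.mem_range]
            exact ⟨by omega, hwb', by omega, htbadj⟩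
          have hWne : W'.Nonempty := ⟨b, hbW⟩
          set w' := W'.min' hWne with hw'
          have hw'W : w' ∈ W' := W'.min'_mem hWne
          have hw'min : ∀ z ∈ W', w' ≤ z := fun z hz => W'.min'_le z hz
          simp only [W', Finset.mem_filter, Finset.mem_range] at hw'W
          obtain ⟨hw'b, hww', hw'n, hadj'⟩ := hw'W
          -- offsets
          have ho_w : (w - t) % 4 = 1 := (hoff ⟨w, hw⟩ hadjw).1 htw
          have ho_w' : (w' - t) % 4 = 1 := (hoff ⟨w', hw'n⟩ hadj').1 ((by omega : t < w'))
          have hw'w4 : (w' - w) % 4 = 0 ∧ w + 4 ≤ w' := by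
            constructor <;> omega
          -- (t, w') is a diagonal
          have htw'd : (t, w') ∈ T.diags := by
            rcases adj_elim_mk T htlt hw'n (by omega) hadj' with h1 | h1 | h1
            · omega
            · omega
            · exact h1
          -- triangle on (t, w')
          obtain ⟨s, hts', hsw', hes1, hes2⟩ := tri T (by omega) (Or.inl htw'd) (by omega)
          have hsadj : T.graph.Adj ⟨t, htlt⟩ ⟨s, by omega⟩ :=
            edgeE_adj T hes1 hts' (by omega)
          have hsw : s = w := by
            by_cases hcs : w < s
            · exfalso
              have : s ∈ W' := by
                simp only [W', Finset.mem_filter, Finset.mem_range]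
                exact ⟨by omega, hcs, by omega, hsadj⟩
              have := hw'min s this
              omega
            · push_neg at hcs
              rcases Nat.eq_or_lt_of_le hcs with h | hsw2
              · exact h
              · exfalso
                have htwd : (t, w) ∈ T.diags := by
                  rcases adj_elim_mk T htlt hw (by omega) hadjw with h1 | h1 | h1
                  · omega
                  · omega
                  · exact h1
                have hsw'd : (s, w') ∈ T.diags := by
                  rcases hes2 with h1 | h1
                  · omega
                  · exact h1
                exact T.noncross _ htwd _ hsw'd (Or.inl ⟨hts', hsw2, by omega⟩)
          -- so (w, w') is an edge, necessarily a diagonal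
          have hwwd : (w, w') ∈ T.diags := by
            rcases hes2 with h1 | h1
            · omega
            · rw [hsw] at h1; exact h1
          have imain := IH (w' - w) (by omega) w w' (by omega) (by omega)
            (by omega) (by omega) hwwd
          have hcww' : c ⟨w, hw⟩ = c ⟨w', by omega⟩ := imain.2 (by omega)
          have hrec := IHk (b - w') (by omega) w' (by omega) (by omega) (by omega) hw'n hadj'
          rw [hcww']
          exact hrec
      -- left chain : every neighbor w < t has c w = c a
      have chainL : ∀ k : ℕ, ∀ w : ℕ, w - a = k → a ≤ w → w < t → ∀ hw : w < n,
          T.graph.Adj ⟨t, htlt⟩ ⟨w, hw⟩ → c ⟨w, hw⟩ = c ⟨a, by omega⟩ := by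
        intro k
        induction k using Nat.strong_induction_on with
        | _ k IHk =>
        intro w hk haw hwt hw hadjw
        rcases Nat.eq_or_lt_of_le haw with rfl | haw'
        · rfl
        · set W' := (Finset.range w).filter
            (fun z => a ≤ z ∧ ∃ hz : z < n, T.graph.Adj ⟨t, htlt⟩ ⟨z, hz⟩) with hW'
          have haW : a ∈ W' := by
            simp only [W', Finset.mem_filter, Finset.mem_range]
            exact ⟨by omega, by omega, by omega, hta.symm⟩
          have hWne : W'.Nonempty := ⟨a, haW⟩
          set w' := W'.max' hWne with hw'
          have hw'W : w' ∈ W' := W'.max'_mem hWne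
          have hw'max : ∀ z ∈ W', z ≤ w' := fun z hz => W'.le_max' z hz
          simp only [W', Finset.mem_filter, Finset.mem_range] at hw'W
          obtain ⟨hw'w, haw'2, hw'n, hadj'⟩ := hw'W
          have ho_w : (t - w) % 4 = 1 := (hoff ⟨w, hw⟩ hadjw).2 hwt
          have ho_w' : (t - w') % 4 = 1 := (hoff ⟨w', hw'n⟩ hadj').2 ((by omega : w' < t))
          -- (w', t) is a diagonal
          have hw'td : (w', t) ∈ T.diags := by
            rcases adj_elim_mk T hw'n htlt (by omega) hadj'.symm with h1 | h1 | h1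
            · omega
            · omega
            · exact h1
          obtain ⟨s, hw's, hst, hes1, hes2⟩ := tri T (by omega) (Or.inl hw'td) (by omega)
          have hsadj : T.graph.Adj ⟨t, htlt⟩ ⟨s, by omega⟩ :=
            (edgeE_adj T hes2 hst htlt).symm
          have hsw : s = w := by
            by_cases hcs : s < w
            · exfalso
              have : s ∈ W' := by
                simp only [W', Finset.mem_filter, Finset.mem_range]
                exact ⟨hcs, by omega, by omega, hsadj⟩
              have := hw'max s this
              omega
            · push_neg at hcs
              rcases Nat.eq_or_lt_of_le hcs with h | hsw2
              · exact h.symm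
              · exfalso
                have htwd : (w, t) ∈ T.diags := by
                  rcases adj_elim_mk T hw htlt (by omega) hadjw.symm with h1 | h1 | h1
                  · omega
                  · omega
                  · exact h1
                have hsw'd : (w', s) ∈ T.diags := by
                  rcases hes1 with h1 | h1
                  · omega
                  · exact h1
                exact T.noncross _ htwd _ hsw'd (Or.inr ⟨hw'w, hsw2, hst⟩)
          have hwwd : (w', w) ∈ T.diags := by
            rcases hes1 with h1 | h1
            · omega
            · rw [hsw] at h1; exact h1
          have imain := IH (w - w') (by omega) w' w (by omega) (by omega)
            (by omega) (by omega) hwwd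
          have hcww' : c ⟨w', hw'n⟩ = c ⟨w, hw⟩ := imain.2 (by omega)
          have hrec := IHk (w' - a) (by omega) w' (by omega) (by omega) (by omega) hw'n hadj'
          rw [← hcww']
          exact hrec
      -- every neighbor's color is c a or c b
      have hval : ∀ u : Fin n, T.graph.Adj ⟨t, htlt⟩ u →
          c u = c ⟨a, by omega⟩ ∨ c u = c ⟨b, by omega⟩ := by
        intro u hu
        have hr := hnbr_range u hu
        rcases Nat.lt_trichotomy u.val t with h | h | h
        · left
          have := chainL (u.val - a) u.val rfl hr.1 h u.isLt (by exact hu)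
          exact this
        · exfalso
          have : u = ⟨t, htlt⟩ := Fin.ext h
          rw [this] at hu
          exact T.graph.loopless.irrefl _ hu
        · right
          have := chainR (b - u.val) u.val rfl h hr.2 u.isLt (by exact hu)
          exact this
      obtain ⟨⟨u1, hu1a, hu1c⟩, ⟨u2, hu2a, hu2c⟩⟩ := hsat ⟨t, htlt⟩ (Or.inr hcentral)
      have hab' : c ⟨a, by omega⟩ ≠ c ⟨b, by omega⟩ := by
        intro he
        have w1 := hval u1 hu1a
        have w2 := hval u2 hu2a
        have e1 : c u1 = c u2 := by
          rcases w1 with h | h <;> rcases w2 with h' | h' <;> rw [h, h']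
          · exact he
          · exact he.symm
        rw [hu1c, hu2c] at e1
        simp at e1
      have o1 : (t - a) % 4 = 1 := (hoff ⟨a, by omega⟩ hta.symm).2 (by exact hat)
      have o2 : (b - t) % 4 = 1 := (hoff ⟨b, by omega⟩ htbadj).1 (by exact htb)
      constructor
      · intro he; exact absurd he hab'
      · intro hmod; exact absurd hmod (by omega)

end GenSun
namespace GenSun
variable {n : ℕ}

lemma n2_not_gensun (T : PolyTriangulation 2) : ¬ IsGenSun T := by
  rintro ⟨h4, hcount⟩
  have hadj : T.graph.Adj ⟨0, by omega⟩ ⟨1, by omega⟩ := adj_succ T (by omega)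
  have hnbr : ∀ v : Fin 2, T.graph.neighborSet v = {⟨1 - v.val, by omega⟩} := by
    intro v
    ext u
    simp only [SimpleGraph.mem_neighborSet, Set.mem_singleton_iff]
    constructor
    · intro h
      have hne := h.ne
      have hvu : v.val ≠ u.val := fun he => hne (Fin.ext he)
      apply Fin.ext
      have hv := v.isLt; have hu := u.isLt
      simp only
      omega
    · intro h
      subst h
      have hv := v.isLt
      by_cases h0 : v.val = 0
      · exact adj_congr T hadj (by simp [h0]) (by simp [h0])
      · exact adj_congr T hadj.symm (by simp; omega) (by simp; omega)
  have hdeg : ∀ v : Fin 2, pdeg T v = 1 := by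
    intro v
    unfold pdeg
    rw [hnbr v]
    exact Set.ncard_singleton _
  have h2 : {v : Fin 2 | pdeg T v = 2} = ∅ := by
    ext v
    simp [hdeg v]
  have hcen : {v : Fin 2 | IsCentral T v} = Set.univ := by
    ext v
    simp only [Set.mem_setOf_eq, Set.mem_univ, iff_true]
    constructor
    · intro u _
      rw [hdeg u]
      omega
    · intro u w hu hw
      have h1 : u ∈ T.graph.neighborSet v := hu
      have h2' : w ∈ T.graph.neighborSet v := hw
      rw [hnbr v] at h1 h2'
      rw [Set.mem_singleton_iff] at h1 h2'
      rw [h1, h2']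
  rw [h2, hcen] at hcount
  rw [Set.ncard_empty, Set.ncard_univ, Nat.card_eq_fintype_card, Fintype.card_fin] at hcount
  omega

variable (T : PolyTriangulation n)

set_option maxHeartbeats 0 in
lemma global0 (hn6 : 6 ≤ n) (hn4 : n % 4 = 2) (c : Fin n → Bool)
    (hspec : ∀ v : Fin n, (pdeg T v = 2 ∨ IsCentral T v) ↔ v.val % 2 = 0)
    (hsat : ∀ v : Fin n, (pdeg T v = 2 ∨ IsCentral T v) →
      (∃ u, T.graph.Adj v u ∧ c u = true) ∧ (∃ u, T.graph.Adj v u ∧ c u = false))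
    (M : ∀ len : ℕ, ∀ a b : ℕ, ∀ (hab : b = a + len) (hbn : b ≤ n - 1) (hpa : a % 2 ≠ 0)
      (hpb : b % 2 ≠ 0) (hd : (a, b) ∈ T.diags),
      ((c ⟨a, by omega⟩ = c ⟨b, by omega⟩) ↔ len % 4 = 0)) : False := by
  classical
  have h0lt : 0 < n := by omega
  have hn1lt : n - 1 < n := by omega
  have h0 : pdeg T ⟨0, h0lt⟩ = 2 ∨ IsCentral T ⟨0, h0lt⟩ :=
    (hspec ⟨0, h0lt⟩).2 ((by omega : (0:ℕ) % 2 = 0))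
  have hps : pv (⟨0, h0lt⟩ : Fin n) = n - 1 := by rw [pv_mk, if_pos rfl]
  have hss : sv (⟨0, h0lt⟩ : Fin n) = 1 := by
    rw [sv_mk, if_neg (by omega : ¬((0:ℕ) = n - 1))]
  rcases h0 with h0 | h0
  · -- vertex 0 has degree 2
    obtain ⟨t, h0t, htn1, he1, he2⟩ := tri T (by omega) (Or.inr ⟨rfl, rfl⟩) (by omega)
    have hadj0t : T.graph.Adj ⟨0, h0lt⟩ ⟨t, by omega⟩ := edgeE_adj T he1 h0t (by omega)
    have ht1 : t = 1 := by
      have hk : t = pv (⟨0, h0lt⟩ : Fin n) ∨ t = sv (⟨0, h0lt⟩ : Fin n) :=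
        deg2_adj T (by omega) h0 hadj0t
      rw [hps, hss] at hk
      rcases hk with h | h <;> omega
    subst ht1
    have hd1 : (1, n - 1) ∈ T.diags := by
      rcases he2 with h | h
      · exfalso; omega
      · exact h
    have hc : c ⟨1, by omega⟩ = c ⟨n - 1, hn1lt⟩ :=
      (M (n - 2) 1 (n - 1) (by omega) (by omega) (by omega) (by omega) hd1).2 (by omega)
    have ecol : ∀ u : Fin n, T.graph.Adj ⟨0, h0lt⟩ u → c u = c ⟨1, by omega⟩ := by
      intro u hu
      have hk := deg2_adj T (by omega) h0 hu
      rw [hps, hss] at hk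
      rcases hk with h | h
      · rw [show u = (⟨n - 1, hn1lt⟩ : Fin n) from Fin.ext h]
        exact hc.symm
      · rw [show u = (⟨1, by omega⟩ : Fin n) from Fin.ext h]
    obtain ⟨⟨u1, hu1a, hu1c⟩, ⟨u2, hu2a, hu2c⟩⟩ := hsat ⟨0, h0lt⟩ (Or.inl h0)
    have e1 := ecol u1 hu1a
    have e2 := ecol u2 hu2a
    rw [hu1c] at e1
    rw [hu2c] at e2
    rw [← e1] at e2
    simp at e2
  · -- vertex 0 is central
    have hnbr0 : ∀ u : Fin n, T.graph.Adj ⟨0, h0lt⟩ u → u.val % 4 = 1 := by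
      intro u hu
      have h1 : ((u.val + n - 0) % n) % 4 = ((1 + n - 0) % n) % 4 :=
        h0.2 u ⟨1, by omega⟩ hu
          ((adj_succ T (by omega : 0 + 1 < n)) : T.graph.Adj ⟨0, h0lt⟩ ⟨1, by omega⟩)
      rw [mod_helper (by omega) u.isLt, mod_helper (by omega) (by omega : (1:ℕ) < n)] at h1
      simp only [if_pos (Nat.zero_le _)] at h1
      omega
    have chain : ∀ k : ℕ, ∀ w : ℕ, (n - 1) - w = k → 0 < w → w ≤ n - 1 → ∀ hw : w < n,
        T.graph.Adj ⟨0, h0lt⟩ ⟨w, hw⟩ → c ⟨w, hw⟩ = c ⟨n - 1, hn1lt⟩ := by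
      intro k
      induction k using Nat.strong_induction_on with
      | _ k IHk =>
      intro w hk h0w hwn hw hadjw
      rcases Nat.eq_or_lt_of_le hwn with rfl | hwb'
      · rfl
      · set W' := (Finset.range n).filter
          (fun z => w < z ∧ ∃ hz : z < n, T.graph.Adj ⟨0, h0lt⟩ ⟨z, hz⟩) with hW'
        have hbW : n - 1 ∈ W' := by
          simp only [W', Finset.mem_filter, Finset.mem_range]
          exact ⟨by omega, hwb', by omega, adj_wrap T (by omega)⟩
        have hWne : W'.Nonempty := ⟨n - 1, hbW⟩
        set w' := W'.min' hWne with hw'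
        have hw'W : w' ∈ W' := W'.min'_mem hWne
        have hw'min : ∀ z ∈ W', w' ≤ z := fun z hz => W'.min'_le z hz
        simp only [W', Finset.mem_filter, Finset.mem_range] at hw'W
        obtain ⟨hw'b, hww', hw'n, hadj'⟩ := hw'W
        have hw'le : w' ≤ n - 1 := by
          have := hw'min (n - 1) hbW
          omega
        have ho_w : w % 4 = 1 := hnbr0 ⟨w, hw⟩ hadjw
        have ho_w' : w' % 4 = 1 := hnbr0 ⟨w', hw'n⟩ hadj'
        have hOK : EdgeOK T 0 w' := by
          by_cases hcw : w' = n - 1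
          · right; exact ⟨rfl, hcw⟩
          · left
            rcases adj_elim_mk T (by omega) hw'n (by omega) hadj' with h1 | h1 | h1
            · omega
            · omega
            · exact h1
        obtain ⟨s, hts', hsw', hes1, hes2⟩ := tri T (by omega) hOK (by omega)
        have hsadj : T.graph.Adj ⟨0, h0lt⟩ ⟨s, by omega⟩ :=
          edgeE_adj T hes1 hts' (by omega)
        have hsw : s = w := by
          by_cases hcs : w < s
          · exfalso
            have hsW : s ∈ W' := by
              simp only [W', Finset.mem_filter, Finset.mem_range]
              exact ⟨by omega, hcs, by omega, hsadj⟩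
            have := hw'min s hsW
            omega
          · push_neg at hcs
            rcases Nat.eq_or_lt_of_le hcs with h | hsw2
            · exact h
            · exfalso
              have htwd : (0, w) ∈ T.diags := by
                rcases adj_elim_mk T (by omega) hw (by omega) hadjw with h1 | h1 | h1
                · omega
                · omega
                · exact h1
              have hsw'd : (s, w') ∈ T.diags := by
                rcases hes2 with h1 | h1
                · omega
                · exact h1
              exact T.noncross _ htwd _ hsw'd (Or.inl ⟨hts', hsw2, by omega⟩)
        have hwwd : (w, w') ∈ T.diags := by
          rcases hes2 with h1 | h1
          · omega
          · rw [hsw] at h1; exact h1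
        have hcww' : c ⟨w, hw⟩ = c ⟨w', by omega⟩ :=
          (M (w' - w) w w' (by omega) (by omega) (by omega) (by omega) hwwd).2 (by omega)
        have hrec := IHk ((n - 1) - w') (by omega) w' (by omega) (by omega) (by omega)
          hw'n hadj'
        rw [hcww']
        exact hrec
    have ecol : ∀ u : Fin n, T.graph.Adj ⟨0, h0lt⟩ u → c u = c ⟨n - 1, hn1lt⟩ := by
      intro u hu
      have hu0 : 0 < u.val := by
        rcases Nat.eq_zero_or_pos u.val with h | h
        · exfalso
          have : u = ⟨0, h0lt⟩ := Fin.ext h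
          rw [this] at hu
          exact T.graph.loopless.irrefl _ hu
        · exact h
      have hun : u.val ≤ n - 1 := by have := u.isLt; omega
      exact chain ((n - 1) - u.val) u.val rfl hu0 hun u.isLt (by exact hu)
    obtain ⟨⟨u1, hu1a, hu1c⟩, ⟨u2, hu2a, hu2c⟩⟩ := hsat ⟨0, h0lt⟩ (Or.inr h0)
    have e1 := ecol u1 hu1a
    have e2 := ecol u2 hu2a
    rw [hu1c] at e1
    rw [hu2c] at e2
    rw [← e1] at e2
    simp at e2

set_option maxHeartbeats 0 in
lemma global1 (hn6 : 6 ≤ n) (hn4 : n % 4 = 2) (c : Fin n → Bool)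
    (hspec : ∀ v : Fin n, (pdeg T v = 2 ∨ IsCentral T v) ↔ v.val % 2 = 1)
    (hsat : ∀ v : Fin n, (pdeg T v = 2 ∨ IsCentral T v) →
      (∃ u, T.graph.Adj v u ∧ c u = true) ∧ (∃ u, T.graph.Adj v u ∧ c u = false))
    (M : ∀ len : ℕ, ∀ a b : ℕ, ∀ (hab : b = a + len) (hbn : b ≤ n - 1) (hpa : a % 2 ≠ 1)
      (hpb : b % 2 ≠ 1) (hd : (a, b) ∈ T.diags),
      ((c ⟨a, by omega⟩ = c ⟨b, by omega⟩) ↔ len % 4 = 0)) : False := by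
  classical
  have h0lt : 0 < n := by omega
  have hn1lt : n - 1 < n := by omega
  have h0 : pdeg T ⟨n - 1, hn1lt⟩ = 2 ∨ IsCentral T ⟨n - 1, hn1lt⟩ :=
    (hspec ⟨n - 1, hn1lt⟩).2 ((by omega : (n - 1) % 2 = 1))
  have hps : pv (⟨n - 1, hn1lt⟩ : Fin n) = n - 2 := by
    rw [pv_mk, if_neg (by omega : ¬(n - 1 = 0))]
    omega
  have hss : sv (⟨n - 1, hn1lt⟩ : Fin n) = 0 := by
    rw [sv_mk, if_pos rfl]
  rcases h0 with h0 | h0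
  · -- vertex n-1 has degree 2
    obtain ⟨t, h0t, htn1, he1, he2⟩ := tri T (by omega) (Or.inr ⟨rfl, rfl⟩) (by omega)
    have hadjt : T.graph.Adj ⟨n - 1, hn1lt⟩ ⟨t, by omega⟩ :=
      (edgeE_adj T he2 htn1 (by omega)).symm
    have ht : t = n - 2 := by
      have hk : t = pv (⟨n - 1, hn1lt⟩ : Fin n) ∨ t = sv (⟨n - 1, hn1lt⟩ : Fin n) :=
        deg2_adj T (by omega) h0 hadjt
      rw [hps, hss] at hk
      rcases hk with h | h <;> omega
    subst ht
    have hd1 : (0, n - 2) ∈ T.diags := by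
      rcases he1 with h | h
      · exfalso; omega
      · exact h
    have hc : c ⟨0, h0lt⟩ = c ⟨n - 2, by omega⟩ :=
      (M (n - 2) 0 (n - 2) (by omega) (by omega) (by omega) (by omega) hd1).2 (by omega)
    have ecol : ∀ u : Fin n, T.graph.Adj ⟨n - 1, hn1lt⟩ u → c u = c ⟨0, h0lt⟩ := by
      intro u hu
      have hk := deg2_adj T (by omega) h0 hu
      rw [hps, hss] at hk
      rcases hk with h | h
      · rw [show u = (⟨n - 2, by omega⟩ : Fin n) from Fin.ext h]
        exact hc.symm
      · rw [show u = (⟨0, h0lt⟩ : Fin n) from Fin.ext h]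
    obtain ⟨⟨u1, hu1a, hu1c⟩, ⟨u2, hu2a, hu2c⟩⟩ := hsat ⟨n - 1, hn1lt⟩ (Or.inl h0)
    have e1 := ecol u1 hu1a
    have e2 := ecol u2 hu2a
    rw [hu1c] at e1
    rw [hu2c] at e2
    rw [← e1] at e2
    simp at e2
  · -- vertex n-1 is central
    have hadjwrap : T.graph.Adj ⟨n - 1, hn1lt⟩ ⟨0, h0lt⟩ := (adj_wrap T (by omega)).symm
    have hnbr0 : ∀ u : Fin n, T.graph.Adj ⟨n - 1, hn1lt⟩ u →
        u.val % 4 = 0 ∧ u.val ≤ n - 2 := by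
      intro u hu
      have hune : u.val ≠ n - 1 := by
        intro h
        have : u = ⟨n - 1, hn1lt⟩ := Fin.ext h
        rw [this] at hu
        exact T.graph.loopless.irrefl _ hu
      have hun : u.val ≤ n - 2 := by have := u.isLt; omega
      have h1 : ((u.val + n - (n - 1)) % n) % 4 = ((0 + n - (n - 1)) % n) % 4 :=
        h0.2 u ⟨0, h0lt⟩ hu hadjwrap
      rw [mod_helper (by omega) u.isLt, mod_helper (by omega) (by omega : (0:ℕ) < n)] at h1
      split_ifs at h1 <;> constructor <;> omega
    have chain : ∀ k : ℕ, ∀ w : ℕ, w = k → w ≤ n - 2 → ∀ hw : w < n,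
        T.graph.Adj ⟨n - 1, hn1lt⟩ ⟨w, hw⟩ → c ⟨w, hw⟩ = c ⟨0, h0lt⟩ := by
      intro k
      induction k using Nat.strong_induction_on with
      | _ k IHk =>
      intro w hk hwn hw hadjw
      rcases Nat.eq_zero_or_pos w with rfl | hw0
      · rfl
      · set W' := (Finset.range w).filter
          (fun z => ∃ hz : z < n, T.graph.Adj ⟨n - 1, hn1lt⟩ ⟨z, hz⟩) with hW'
        have hbW : 0 ∈ W' := by
          simp only [W', Finset.mem_filter, Finset.mem_range]
          exact ⟨by omega, by omega, hadjwrap⟩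
        have hWne : W'.Nonempty := ⟨0, hbW⟩
        set w' := W'.max' hWne with hw'
        have hw'W : w' ∈ W' := W'.max'_mem hWne
        have hw'max : ∀ z ∈ W', z ≤ w' := fun z hz => W'.le_max' z hz
        simp only [W', Finset.mem_filter, Finset.mem_range] at hw'W
        obtain ⟨hw'w, hw'n, hadj'⟩ := hw'W
        have ho_w : w % 4 = 0 := (hnbr0 ⟨w, hw⟩ hadjw).1
        have ho_w' : w' % 4 = 0 := (hnbr0 ⟨w', hw'n⟩ hadj').1
        have hw'2 : w' ≤ n - 2 := (hnbr0 ⟨w', hw'n⟩ hadj').2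
        have hOK : EdgeOK T w' (n - 1) := by
          by_cases hcw : w' = 0
          · right; exact ⟨hcw, rfl⟩
          · left
            rcases adj_elim_mk T hw'n (by omega) (by omega) hadj'.symm with h1 | h1 | h1
            · omega
            · omega
            · exact h1
        obtain ⟨s, hts', hsw', hes1, hes2⟩ := tri T (by omega) hOK (by omega)
        have hsadj : T.graph.Adj ⟨n - 1, hn1lt⟩ ⟨s, by omega⟩ :=
          (edgeE_adj T hes2 hsw' (by omega)).symm
        have hsw : s = w := by
          by_cases hcs : s < w
          · exfalso
            have hsW : s ∈ W' := by
              simp only [W', Finset.mem_filter, Finset.mem_range]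
              exact ⟨hcs, by omega, hsadj⟩
            have := hw'max s hsW
            omega
          · push_neg at hcs
            rcases Nat.eq_or_lt_of_le hcs with h | hsw2
            · exact h.symm
            · exfalso
              have htwd : (w, n - 1) ∈ T.diags := by
                rcases adj_elim_mk T hw (by omega) (by omega) hadjw.symm with h1 | h1 | h1
                · omega
                · omega
                · exact h1
              have hsw'd : (w', s) ∈ T.diags := by
                rcases hes1 with h1 | h1
                · omega
                · exact h1
              exact T.noncross _ htwd _ hsw'd (Or.inr ⟨by omega, hsw2, by omega⟩)
        have hwwd : (w', w) ∈ T.diags := by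
          rcases hes1 with h1 | h1
          · omega
          · rw [hsw] at h1; exact h1
        have hcww' : c ⟨w', hw'n⟩ = c ⟨w, hw⟩ :=
          (M (w - w') w' w (by omega) (by omega) (by omega) (by omega) hwwd).2 (by omega)
        have hrec := IHk w' (by omega) w' rfl (by omega) hw'n hadj'
        rw [← hcww']
        exact hrec
    have ecol : ∀ u : Fin n, T.graph.Adj ⟨n - 1, hn1lt⟩ u → c u = c ⟨0, h0lt⟩ := by
      intro u hu
      have hun : u.val ≤ n - 2 := (hnbr0 u hu).2
      exact chain u.val u.val rfl hun u.isLt (by exact hu)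
    obtain ⟨⟨u1, hu1a, hu1c⟩, ⟨u2, hu2a, hu2c⟩⟩ := hsat ⟨n - 1, hn1lt⟩ (Or.inr h0)
    have e1 := ecol u1 hu1a
    have e2 := ecol u2 hu2a
    rw [hu1c] at e1
    rw [hu2c] at e2
    rw [← e1] at e2
    simp at e2

lemma no_coloring (hs : IsGenSun T) :
    ¬ ∃ c : Fin n → Bool, ∀ v : Fin n, (pdeg T v = 2 ∨ IsCentral T v) →
      (∃ u, T.graph.Adj v u ∧ c u = true) ∧ (∃ u, T.graph.Adj v u ∧ c u = false) := by
  rintro ⟨c, hsat⟩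
  have hn4 := hs.1
  by_cases hn2 : n = 2
  · subst hn2
    exact n2_not_gensun T hs
  have hn6 : 6 ≤ n := by omega
  classical
  obtain ⟨ρ, hρ1, hspec⟩ := spec_parity T hn6 hs
  have M := main T hn6 hn4 c ρ hρ1 hspec hsat
  by_cases hρ : ρ = 0
  · subst hρ
    exact global0 T hn6 hn4 c hspec hsat M
  · have hρ' : ρ = 1 := by omega
    subst hρ'
    exact global1 T hn6 hn4 c hspec hsat M

end GenSun
/-- no generalized sun graph has two disjoint total dominating sets;
stronger form: there is no 2-coloring of the vertices such that every degree-2 vertex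
and every central vertex sees both colors in its neighborhood. -/
theorem stmt10 (n : ℕ) (T : PolyTriangulation n) (hs : IsGenSun T) :
    (¬ HasTwoTDS T.graph) ∧
    ¬ ∃ c : Fin n → Bool, ∀ v : Fin n, (pdeg T v = 2 ∨ IsCentral T v) →
        (∃ u, T.graph.Adj v u ∧ c u = true) ∧ (∃ u, T.graph.Adj v u ∧ c u = false) := by
  have h2 := GenSun.no_coloring T hs
  refine ⟨?_, h2⟩
  rintro ⟨S1, S2, hdisj, td1, td2⟩
  apply h2
  classical
  refine ⟨fun v => decide (v ∈ S1), ?_⟩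
  intro v _
  constructor
  · obtain ⟨u, hu, hadj⟩ := td1 v
    exact ⟨u, hadj, by simp [hu]⟩
  · obtain ⟨u, hu, hadj⟩ := td2 v
    refine ⟨u, hadj, ?_⟩
    have hnot : u ∉ S1 := fun h => Set.disjoint_left.1 hdisj h hu
    simp [hnot]
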